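/- Let M = A ⊗ B where A is an m×m matrix and B is an n×n matrix over a field. For any nonnegative integers r₁, r₂, the regular-rigidity satisfies r_M(r₁·n + r₂·m) ≤ r_A(r₁) · r_B(r₂). -/

import Mathlib

open Matrix

open scoped Classical in
noncomputable def regRigidity {ι F : Type*} [Fintype ι] [Field F]
    (M : Matrix ι ι F) (r : ℕ) : ℕ :=
  sInf {s : ℕ | ∃ E : Matrix ι ι F,
    (∀ i, (Finset.univ.filter fun j => E i j ≠ 0).card ≤ s) ∧
    (∀ j, (Finset.univ.filter fun i => E i j ≠ 0).card ≤ s) ∧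
    (M - E).rank ≤ r}

open Module LinearMap TensorProduct
open scoped Kronecker

lemma finrank_range_tensor_map_le {F V W V' W' : Type*} [Field F]
    [AddCommGroup V] [Module F V] [AddCommGroup W] [Module F W]
    [AddCommGroup V'] [Module F V'] [AddCommGroup W'] [Module F W']
    [FiniteDimensional F V'] [FiniteDimensional F W']
    (f : V →ₗ[F] V') (g : W →ₗ[F] W') :
    finrank F (range (TensorProduct.map f g)) ≤
      finrank F (range f) * finrank F (range g) := by
  have h : range (TensorProduct.map f g) ≤
      range (TensorProduct.mapIncl (range f) (range g)) := by
    rw [TensorProduct.range_map_eq_span_tmul, TensorProduct.range_mapIncl,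
      Submodule.map₂_eq_span_image2]
    apply Submodule.span_mono
    rintro _ ⟨a, b, rfl⟩
    exact ⟨f a, ⟨a, rfl⟩, g b, ⟨b, rfl⟩, rfl⟩
  calc finrank F (range (TensorProduct.map f g))
      ≤ finrank F (range (TensorProduct.mapIncl (range f) (range g))) :=
        Submodule.finrank_mono h
    _ ≤ finrank F ((range f) ⊗[F] (range g)) := LinearMap.finrank_range_le _
    _ = finrank F (range f) * finrank F (range g) := Module.finrank_tensorProduct

lemma matrix_rank_kronecker_le {F : Type*} [Field F] {ι₁ ι₂ κ₁ κ₂ : Type*}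
    [Fintype ι₁] [Fintype ι₂] [Fintype κ₁] [Fintype κ₂]
    [DecidableEq ι₂] [DecidableEq κ₂]
    (X : Matrix ι₁ ι₂ F) (Y : Matrix κ₁ κ₂ F) :
    (X ⊗ₖ Y).rank ≤ X.rank * Y.rank := by
  classical
  let b₁ := Pi.basisFun F ι₁
  let b₂ := Pi.basisFun F ι₂
  let c₁ := Pi.basisFun F κ₁
  let c₂ := Pi.basisFun F κ₂
  rw [Matrix.rank_eq_finrank_range_toLin (X ⊗ₖ Y) (b₁.tensorProduct c₁) (b₂.tensorProduct c₂),
    Matrix.rank_eq_finrank_range_toLin X b₁ b₂,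
    Matrix.rank_eq_finrank_range_toLin Y c₁ c₂,
    Matrix.toLin_kronecker]
  exact finrank_range_tensor_map_le _ _

lemma matrix_rank_add_le {F : Type*} [Field F] {ι κ : Type*} [Fintype ι] [Fintype κ]
    (M N : Matrix ι κ F) : (M + N).rank ≤ M.rank + N.rank := by
  have h : LinearMap.range (M + N).mulVecLin ≤
      LinearMap.range M.mulVecLin ⊔ LinearMap.range N.mulVecLin := by
    rintro _ ⟨v, rfl⟩
    rw [Matrix.mulVecLin_add]
    exact Submodule.add_mem_sup ⟨v, rfl⟩ ⟨v, rfl⟩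
  calc (M + N).rank = finrank F (LinearMap.range (M + N).mulVecLin) := rfl
    _ ≤ finrank F ↥(LinearMap.range M.mulVecLin ⊔ LinearMap.range N.mulVecLin) :=
        Submodule.finrank_mono h
    _ ≤ finrank F (LinearMap.range M.mulVecLin) + finrank F (LinearMap.range N.mulVecLin) := by
        exact (Submodule.finrank_add_le_finrank_add_finrank _ _)
    _ = M.rank + N.rank := rfl

open scoped Classical in
lemma regRigidity_mem {ι F : Type*} [Fintype ι] [Field F] (M : Matrix ι ι F) (r : ℕ) :
    ∃ E : Matrix ι ι F,
    (∀ i, (Finset.univ.filter fun j => E i j ≠ 0).card ≤ regRigidity M r) ∧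
    (∀ j, (Finset.univ.filter fun i => E i j ≠ 0).card ≤ regRigidity M r) ∧
    (M - E).rank ≤ r := by
  have hne : {s : ℕ | ∃ E : Matrix ι ι F,
      (∀ i, (Finset.univ.filter fun j => E i j ≠ 0).card ≤ s) ∧
      (∀ j, (Finset.univ.filter fun i => E i j ≠ 0).card ≤ s) ∧
      (M - E).rank ≤ r}.Nonempty :=
    ⟨Fintype.card ι, M, fun i => (Finset.card_filter_le _ _).trans (by simp),
      fun j => (Finset.card_filter_le _ _).trans (by simp),
      by simp [sub_self, Matrix.rank_zero]⟩
  exact Nat.sInf_mem hne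

/-- Regular-rigidity of a Kronecker product:
`r_{A ⊗ B}(r₁ n + r₂ m) ≤ r_A(r₁) · r_B(r₂)`. -/
theorem kronecker_regRigidity {F : Type*} [Field F] {m n : ℕ}
    (A : Matrix (Fin m) (Fin m) F) (B : Matrix (Fin n) (Fin n) F) (r₁ r₂ : ℕ) :
    regRigidity (Matrix.kroneckerMap (· * ·) A B) (r₁ * n + r₂ * m) ≤
      regRigidity A r₁ * regRigidity B r₂ := by
  classical
  obtain ⟨EA, hA1, hA2, hA3⟩ := regRigidity_mem A r₁
  obtain ⟨EB, hB1, hB2, hB3⟩ := regRigidity_mem B r₂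
  apply Nat.sInf_le
  refine ⟨Matrix.kroneckerMap (· * ·) EA EB, ?_, ?_, ?_⟩
  · rintro ⟨i, p⟩
    calc (Finset.univ.filter fun jq : Fin m × Fin n =>
            Matrix.kroneckerMap (· * ·) EA EB (i, p) jq ≠ 0).card
        ≤ ((Finset.univ.filter fun j => EA i j ≠ 0) ×ˢ
            (Finset.univ.filter fun q => EB p q ≠ 0)).card := by
          apply Finset.card_le_card
          rintro ⟨j, q⟩ hjq
          simp only [Finset.mem_filter, Finset.mem_univ, true_and, Finset.mem_product,
            Matrix.kroneckerMap_apply] at hjq ⊢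
          exact ⟨left_ne_zero_of_mul (Finset.mem_filter.mp hjq).2, right_ne_zero_of_mul (Finset.mem_filter.mp hjq).2⟩
      _ = _ := Finset.card_product _ _
      _ ≤ regRigidity A r₁ * regRigidity B r₂ := Nat.mul_le_mul (hA1 i) (hB1 p)
  · rintro ⟨j, q⟩
    calc (Finset.univ.filter fun ip : Fin m × Fin n =>
            Matrix.kroneckerMap (· * ·) EA EB ip (j, q) ≠ 0).card
        ≤ ((Finset.univ.filter fun i => EA i j ≠ 0) ×ˢ
            (Finset.univ.filter fun p => EB p q ≠ 0)).card := by
          apply Finset.card_le_card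
          rintro ⟨i, p⟩ hip
          simp only [Finset.mem_filter, Finset.mem_univ, true_and, Finset.mem_product,
            Matrix.kroneckerMap_apply] at hip ⊢
          exact ⟨left_ne_zero_of_mul (Finset.mem_filter.mp hip).2, right_ne_zero_of_mul (Finset.mem_filter.mp hip).2⟩
      _ = _ := Finset.card_product _ _
      _ ≤ regRigidity A r₁ * regRigidity B r₂ := Nat.mul_le_mul (hA2 j) (hB2 q)
  · have key : Matrix.kroneckerMap (· * ·) A B - Matrix.kroneckerMap (· * ·) EA EB =
        Matrix.kroneckerMap (· * ·) (A - EA) B + Matrix.kroneckerMap (· * ·) EA (B - EB) := by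
      ext ⟨i, p⟩ ⟨j, q⟩
      simp only [Matrix.sub_apply, Matrix.add_apply, Matrix.kroneckerMap_apply]
      ring
    rw [key]
    calc (Matrix.kroneckerMap (· * ·) (A - EA) B +
            Matrix.kroneckerMap (· * ·) EA (B - EB)).rank
        ≤ (Matrix.kroneckerMap (· * ·) (A - EA) B).rank +
            (Matrix.kroneckerMap (· * ·) EA (B - EB)).rank := matrix_rank_add_le _ _
      _ ≤ (A - EA).rank * B.rank + EA.rank * (B - EB).rank :=
          add_le_add (matrix_rank_kronecker_le _ _) (matrix_rank_kronecker_le _ _)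
      _ ≤ r₁ * n + m * r₂ :=
          add_le_add (Nat.mul_le_mul hA3 (Matrix.rank_le_width B))
            (Nat.mul_le_mul (Matrix.rank_le_width EA) hB3)
      _ = r₁ * n + r₂ * m := by ring
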